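/- arXiv:2401.17665 — 3 statements merged into one kernel-verified Lean document; each statement's English description precedes it below -/
import Mathlib

section
/- Let a, h, α > 0, 0 < k < h, ζ ≥ 0, and f(x) := 0 for |x| < k and f(x) := (|x| − k)^ζ for k ≤ |x| < h. Let γ_a := (α + (1/√a)·∫₀ʰ f(y)·sinh((h − y)/√a) dy) / cosh(h/√a). Then γ_a ~ Γ(1 + ζ)·a^{ζ/2}·e^{−k/√a} as a → 0⁺, i.e., the ratio γ_a / (Γ(1 + ζ)·a^{ζ/2}·e^{−k/√a}) tends to 1. -/
open Set Filter Real
open scoped Topology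

noncomputable section

section Helpers
open MeasureTheory
open scoped Interval

lemma decay (s c : ℝ) (hc : 0 < c) :
    Tendsto (fun ε : ℝ => ε ^ s * rexp (-(c / ε))) (𝓝[>] (0:ℝ)) (𝓝 0) := by
  have h1 := (tendsto_rpow_mul_exp_neg_mul_atTop_nhds_zero (-s) c hc).comp
    tendsto_inv_nhdsGT_zero
  refine h1.congr' ?_
  filter_upwards [self_mem_nhdsWithin] with ε (hε : 0 < ε)
  simp only [Function.comp_apply]
  rw [Real.inv_rpow hε.le, Real.rpow_neg hε.le, inv_inv]
  ring_nf

lemma coshratio (c : ℝ) (hc : 0 < c) :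
    Tendsto (fun ε : ℝ => rexp (c / ε) / (2 * Real.cosh (c / ε))) (𝓝[>] (0:ℝ)) (𝓝 1) := by
  have key : Tendsto (fun x : ℝ => rexp x / (2 * Real.cosh x)) atTop (𝓝 1) := by
    have h2 : Tendsto (fun x : ℝ => 1 + rexp (-(2 * x))) atTop (𝓝 1) := by
      have := (Real.tendsto_exp_neg_atTop_nhds_zero.comp
        (tendsto_id.const_mul_atTop (two_pos : (0:ℝ) < 2)))
      simpa using tendsto_const_nhds.add this
    have h3 := (h2.inv₀ one_ne_zero)
    simp only [inv_one] at h3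
    refine h3.congr fun x => ?_
    have h0 : rexp x ≠ 0 := Real.exp_ne_zero x
    rw [Real.cosh_eq, show -(2*x) = -x + -x by ring, Real.exp_add, Real.exp_neg]
    rw [eq_div_iff (by positivity)]
    field_simp
  have harg : Tendsto (fun ε : ℝ => c / ε) (𝓝[>] (0:ℝ)) atTop := by
    have := tendsto_inv_nhdsGT_zero (𝕜 := ℝ)
    simpa [div_eq_mul_inv] using this.const_mul_atTop hc
  exact key.comp harg

lemma Plimit (c ζ : ℝ) (hc : 0 < c) (hζ : 0 ≤ ζ) :
    Tendsto (fun ε : ℝ => ∫ u in (0:ℝ)..(c / ε), rexp (-u) * u ^ ζ)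
      (𝓝[>] (0:ℝ)) (𝓝 (Real.Gamma (1 + ζ))) := by
  have hint : IntegrableOn (fun u : ℝ => rexp (-u) * u ^ ζ) (Ioi 0) := by
    simpa using Real.GammaIntegral_convergent (s := ζ + 1) (by linarith)
  have harg : Tendsto (fun ε : ℝ => c / ε) (𝓝[>] (0:ℝ)) atTop := by
    simpa [div_eq_mul_inv] using (tendsto_inv_nhdsGT_zero (𝕜 := ℝ)).const_mul_atTop hc
  have := intervalIntegral_tendsto_integral_Ioi 0 hint harg
  rw [Real.Gamma_eq_integral (by linarith : (0:ℝ) < 1 + ζ)]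
  simpa using this

lemma Jplus (k h ζ ε : ℝ) (hk : k < h) (hε : 0 < ε) (hζ : 0 ≤ ζ) :
    (∫ y in k..h, (y - k) ^ ζ * rexp ((h - y) / ε)) =
      rexp ((h - k) / ε) * (ε * (ε ^ ζ *
        ∫ u in (0:ℝ)..((h - k) / ε), rexp (-u) * u ^ ζ)) := by
  have step1 : (∫ y in k..h, (y - k) ^ ζ * rexp ((h - y) / ε)) =
      ∫ t in (0:ℝ)..(h - k), (t + k - k) ^ ζ * rexp ((h - (t + k)) / ε) := by
    rw [intervalIntegral.integral_comp_add_right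
      (fun y => (y - k) ^ ζ * rexp ((h - y) / ε)) k]
    norm_num
  have step2 : (∫ t in (0:ℝ)..(h - k), (t + k - k) ^ ζ * rexp ((h - (t + k)) / ε)) =
      rexp ((h - k) / ε) * ∫ t in (0:ℝ)..(h - k), t ^ ζ * rexp (-(t / ε)) := by
    rw [← intervalIntegral.integral_const_mul]
    refine intervalIntegral.integral_congr fun t _ => ?_
    have : (h - (t + k)) / ε = (h - k) / ε + -(t / ε) := by ring
    rw [this, Real.exp_add]
    ring_nf
  have step3 : (∫ t in (0:ℝ)..(h - k), t ^ ζ * rexp (-(t / ε))) =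
      ε * (ε ^ ζ * ∫ u in (0:ℝ)..((h - k) / ε), rexp (-u) * u ^ ζ) := by
    have hcomp := intervalIntegral.integral_comp_mul_left
      (a := (0:ℝ)) (b := (h - k) / ε) (fun t => t ^ ζ * rexp (-(t / ε))) hε.ne'
    rw [mul_zero, mul_div_cancel₀ _ hε.ne'] at hcomp
    have step3a : (∫ u in (0:ℝ)..((h - k) / ε), (ε * u) ^ ζ * rexp (-(ε * u / ε))) =
        ε ^ ζ * ∫ u in (0:ℝ)..((h - k) / ε), rexp (-u) * u ^ ζ := by
      rw [← intervalIntegral.integral_const_mul]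
      refine intervalIntegral.integral_congr fun u hu => ?_
      have hu0 : 0 ≤ u := by
        rcases hu with ⟨h1, h2⟩
        simp only [inf_le_iff, le_inf_iff] at *
        rcases h1 with h1 | h1
        · exact h1
        · nlinarith [div_nonneg (by linarith : (0:ℝ) ≤ h - k) hε.le]
      rw [Real.mul_rpow hε.le hu0, mul_div_cancel_left₀ _ hε.ne']
      ring
    rw [step3a, smul_eq_mul] at hcomp
    rw [hcomp, ← mul_assoc, mul_inv_cancel₀ hε.ne', one_mul]
  rw [step1, step2, step3]

lemma splitint (h k ζ ε : ℝ) (hk0 : 0 < k) (hkh : k < h) (hζ : 0 ≤ ζ)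
    (f : ℝ → ℝ) (hf : ∀ x : ℝ, f x = if |x| < k then 0 else (|x| - k) ^ ζ) :
    (∫ y in (0:ℝ)..h, f y * Real.sinh ((h - y) / ε)) =
      ∫ y in k..h, (y - k) ^ ζ * Real.sinh ((h - y) / ε) := by
  set S : ℝ → ℝ := fun y => Real.sinh ((h - y) / ε) with hSdef
  have hS : Continuous S :=
    Real.continuous_sinh.comp ((continuous_const.sub continuous_id).div_const ε)
  have hgcont : Continuous fun y : ℝ => (y - k) ^ ζ * S y := by
    exact ((continuous_id.sub continuous_const).rpow_const fun x => Or.inr hζ).mul hS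
  have heq2 : EqOn (fun y : ℝ => f y * S y) (fun y : ℝ => (y - k) ^ ζ * S y) (uIcc k h) := by
    intro y hy
    rw [uIcc_of_le hkh.le] at hy
    have hyk : k ≤ y := hy.1
    have hy0 : 0 ≤ y := le_trans hk0.le hyk
    simp only [hf, abs_of_nonneg hy0, if_neg (not_lt.2 hyk)]
  have hae : ∀ᵐ y : ℝ, y ∈ Ι (0:ℝ) k → f y * S y = 0 := by
    have hk' := (Set.countable_singleton k).ae_notMem (μ := volume)
    filter_upwards [hk'] with y hy hymem
    rw [uIoc_of_le hk0.le] at hymem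
    have h1 : 0 < y := hymem.1
    have h2 : y < k := lt_of_le_of_ne hymem.2 (by simpa using hy)
    rw [hf, abs_of_nonneg h1.le, if_pos h2, zero_mul]
  have hi2 : IntervalIntegrable (fun y => f y * S y) volume k h := by
    rw [intervalIntegrable_iff]
    have hg : IntegrableOn (fun y : ℝ => (y - k) ^ ζ * S y) (Ι k h) volume := by
      rw [← intervalIntegrable_iff]
      exact hgcont.intervalIntegrable k h
    exact hg.congr_fun (heq2.mono uIoc_subset_uIcc).symm measurableSet_uIoc
  have hi1 : IntervalIntegrable (fun y => f y * S y) volume 0 k := by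
    rw [intervalIntegrable_iff]
    have h0 : Integrable (fun _ : ℝ => (0:ℝ)) (volume.restrict (Ι (0:ℝ) k)) :=
      integrable_zero _ _ _
    have he : (fun y => f y * S y) =ᶠ[ae (volume.restrict (Ι (0:ℝ) k))] (fun _ => (0:ℝ)) :=
      (ae_restrict_iff' measurableSet_uIoc).mpr hae
    exact h0.congr he.symm
  have hsplit := intervalIntegral.integral_add_adjacent_intervals hi1 hi2
  have hzero : (∫ y in (0:ℝ)..k, f y * S y) = 0 := by
    rw [intervalIntegral.integral_congr_ae hae]
    simp
  rw [← hsplit, hzero, zero_add, intervalIntegral.integral_congr heq2]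

lemma sinhsplit (k h ζ ε : ℝ) (hζ : 0 ≤ ζ) :
    (∫ y in k..h, (y - k) ^ ζ * Real.sinh ((h - y) / ε)) =
      ((∫ y in k..h, (y - k) ^ ζ * rexp ((h - y) / ε)) -
        ∫ y in k..h, (y - k) ^ ζ * rexp (-((h - y) / ε))) / 2 := by
  have crp : Continuous fun y : ℝ => (y - k) ^ ζ :=
    (continuous_id.sub continuous_const).rpow_const fun x => Or.inr hζ
  have carg : Continuous fun y : ℝ => (h - y) / ε :=
    (continuous_const.sub continuous_id).div_const ε
  have c1 : Continuous fun y : ℝ => (y - k) ^ ζ * rexp ((h - y) / ε) :=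
    crp.mul (Real.continuous_exp.comp carg)
  have c2 : Continuous fun y : ℝ => (y - k) ^ ζ * rexp (-((h - y) / ε)) :=
    crp.mul (Real.continuous_exp.comp carg.neg)
  have step : (∫ y in k..h, (y - k) ^ ζ * Real.sinh ((h - y) / ε)) =
      ∫ y in k..h, ((y - k) ^ ζ * rexp ((h - y) / ε) -
        (y - k) ^ ζ * rexp (-((h - y) / ε))) / 2 := by
    refine intervalIntegral.integral_congr fun y _ => ?_
    rw [Real.sinh_eq]
    ring
  rw [step, intervalIntegral.integral_div,
    intervalIntegral.integral_sub (c1.intervalIntegrable k h) (c2.intervalIntegrable k h)]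

theorem main_eps (h α k ζ : ℝ) (hh : 0 < h) (hα : 0 < α) (hk0 : 0 < k) (hkh : k < h)
    (hζ : 0 ≤ ζ)
    (f : ℝ → ℝ) (hf : ∀ x : ℝ, f x = if |x| < k then 0 else (|x| - k) ^ ζ) :
    Tendsto (fun ε : ℝ =>
        ((α + (1 / ε) * ∫ y in (0:ℝ)..h, f y * Real.sinh ((h - y) / ε)) /
          Real.cosh (h / ε)) /
        (Real.Gamma (1 + ζ) * ε ^ ζ * Real.exp (-k / ε)))
      (𝓝[>] (0:ℝ)) (𝓝 1) := by
  have hΓ : 0 < Real.Gamma (1 + ζ) := Real.Gamma_pos_of_pos (by linarith)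
  set Γ' := Real.Gamma (1 + ζ) with hΓ'def
  set P : ℝ → ℝ := fun ε => ∫ u in (0:ℝ)..((h - k) / ε), rexp (-u) * u ^ ζ with hP
  set Jm : ℝ → ℝ := fun ε => ∫ y in k..h, (y - k) ^ ζ * rexp (-((h - y) / ε)) with hJmdef
  set T1 : ℝ → ℝ := fun ε =>
    (α / Γ') * (ε ^ (-ζ) * rexp (-((h - k) / ε))) *
      (rexp (h / ε) / (2 * Real.cosh (h / ε))) * 2 with hT1
  set T2 : ℝ → ℝ := fun ε =>
    (P ε / Γ') * (rexp (h / ε) / (2 * Real.cosh (h / ε))) with hT2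
  set Q : ℝ → ℝ := fun ε =>
    (1 / Γ') * (ε ^ (-(ζ + 1)) * rexp (-((h - k) / ε))) *
      (rexp (h / ε) / (2 * Real.cosh (h / ε))) with hQdef
  set T3 : ℝ → ℝ := fun ε => Jm ε * Q ε with hT3
  have limT1 : Tendsto T1 (𝓝[>] (0:ℝ)) (𝓝 0) := by
    have h1 := ((tendsto_const_nhds (x := α / Γ')).mul
      (decay (-ζ) (h - k) (by linarith))).mul (coshratio h hh) |>.mul
      (tendsto_const_nhds (x := (2:ℝ)))
    have h0 : (α / Γ') * 0 * 1 * 2 = (0:ℝ) := by ring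
    rw [h0] at h1
    exact h1
  have limT2 : Tendsto T2 (𝓝[>] (0:ℝ)) (𝓝 1) := by
    have h1 := ((Plimit (h - k) ζ (by linarith) hζ).div_const Γ').mul (coshratio h hh)
    rw [← hΓ'def, div_self hΓ.ne', one_mul] at h1
    exact h1
  have limQ : Tendsto Q (𝓝[>] (0:ℝ)) (𝓝 0) := by
    have h1 := ((tendsto_const_nhds (x := 1 / Γ')).mul
      (decay (-(ζ + 1)) (h - k) (by linarith))).mul (coshratio h hh)
    have h0 : (1 / Γ') * 0 * 1 = (0:ℝ) := by ring
    rw [h0] at h1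
    exact h1
  have hM : (0:ℝ) ≤ (h - k) ^ ζ * (h - k) := by
    have : (0:ℝ) ≤ h - k := by linarith
    positivity
  have hQ0 : ∀ ε : ℝ, 0 < ε → 0 ≤ Q ε := by
    intro ε hε
    have h1 : (0:ℝ) < ε ^ (-(ζ + 1)) := Real.rpow_pos_of_pos hε _
    have h2 := Real.cosh_pos (h / ε)
    have h3 := Real.exp_pos (-((h - k) / ε))
    have h4 := Real.exp_pos (h / ε)
    simp only [hQdef]
    positivity
  have limT3 : Tendsto T3 (𝓝[>] (0:ℝ)) (𝓝 0) := by
    have limg : Tendsto (fun ε => ((h - k) ^ ζ * (h - k)) * Q ε) (𝓝[>] (0:ℝ)) (𝓝 0) := by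
      have := limQ.const_mul ((h - k) ^ ζ * (h - k))
      rw [mul_zero] at this
      exact this
    refine squeeze_zero' ?_ ?_ limg
    · filter_upwards [self_mem_nhdsWithin] with ε (hε : 0 < ε)
      have hJm0 : 0 ≤ Jm ε := by
        refine intervalIntegral.integral_nonneg hkh.le fun u hu => ?_
        have : (0:ℝ) ≤ u - k := by linarith [hu.1]
        positivity
      exact mul_nonneg hJm0 (hQ0 ε hε)
    · filter_upwards [self_mem_nhdsWithin] with ε (hε : 0 < ε)
      have hJmM : Jm ε ≤ (h - k) ^ ζ * (h - k) := by
        have hle : Jm ε ≤ ∫ _ in k..h, (h - k) ^ ζ := by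
          have crp : Continuous fun y : ℝ => (y - k) ^ ζ :=
            (continuous_id.sub continuous_const).rpow_const fun x => Or.inr hζ
          have carg : Continuous fun y : ℝ => (h - y) / ε :=
            (continuous_const.sub continuous_id).div_const ε
          have c2 : Continuous fun y : ℝ => (y - k) ^ ζ * rexp (-((h - y) / ε)) :=
            crp.mul (Real.continuous_exp.comp carg.neg)
          refine intervalIntegral.integral_mono_on hkh.le (c2.intervalIntegrable k h)
            intervalIntegrable_const fun y hy => ?_
          have hy1 : 0 ≤ y - k := by linarith [hy.1]
          have he : rexp (-((h - y) / ε)) ≤ 1 := by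
            rw [Real.exp_le_one_iff]
            have : (0:ℝ) ≤ (h - y) / ε := div_nonneg (by linarith [hy.2]) hε.le
            linarith
          calc (y - k) ^ ζ * rexp (-((h - y) / ε)) ≤ (y - k) ^ ζ * 1 :=
                mul_le_mul_of_nonneg_left he (Real.rpow_nonneg hy1 ζ)
            _ = (y - k) ^ ζ := mul_one _
            _ ≤ (h - k) ^ ζ := Real.rpow_le_rpow hy1 (by linarith [hy.2]) hζ
        calc Jm ε ≤ ∫ _ in k..h, (h - k) ^ ζ := hle
          _ = (h - k) ^ ζ * (h - k) := by
              rw [intervalIntegral.integral_const, smul_eq_mul]; ring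
      exact mul_le_mul_of_nonneg_right hJmM (hQ0 ε hε)
  have limsum : Tendsto (fun ε => T1 ε + T2 ε - T3 ε) (𝓝[>] (0:ℝ)) (𝓝 1) := by
    have := (limT1.add limT2).sub limT3
    simpa using this
  refine limsum.congr' ?_
  filter_upwards [self_mem_nhdsWithin] with ε (hε : 0 < ε)
  rw [splitint h k ζ ε hk0 hkh hζ f hf, sinhsplit k h ζ ε hζ,
    Jplus k h ζ ε hkh hε hζ]
  have e1 : rexp ((h - k) / ε) = rexp (h / ε) * (rexp (k / ε))⁻¹ := by
    rw [← Real.exp_neg, ← Real.exp_add]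
    congr 1
    ring
  have e2 : rexp (-k / ε) = (rexp (k / ε))⁻¹ := by
    rw [← Real.exp_neg]
    congr 1
    ring
  have e3 : rexp (-((h - k) / ε)) = (rexp (h / ε))⁻¹ * rexp (k / ε) := by
    rw [← Real.exp_neg, ← Real.exp_add]
    congr 1
    ring
  have e4 : ε ^ (-ζ) = (ε ^ ζ)⁻¹ := Real.rpow_neg hε.le ζ
  have e5 : ε ^ (-(ζ + 1)) = (ε ^ ζ)⁻¹ * ε⁻¹ := by
    rw [Real.rpow_neg hε.le, Real.rpow_add hε, Real.rpow_one, mul_inv]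
  simp only [hT1, hT2, hT3, hQdef, hP, hJmdef]
  generalize (∫ u in (0:ℝ)..((h - k) / ε), rexp (-u) * u ^ ζ) = p
  generalize (∫ y in k..h, (y - k) ^ ζ * rexp (-((h - y) / ε))) = j
  rw [e1, e2, e3, e4, e5]
  have hX : rexp (h / ε) ≠ 0 := Real.exp_ne_zero _
  have hY : rexp (k / ε) ≠ 0 := Real.exp_ne_zero _
  have hC : Real.cosh (h / ε) ≠ 0 := (Real.cosh_pos _).ne'
  have hZ : ε ^ ζ ≠ 0 := (Real.rpow_pos_of_pos hε ζ).ne'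
  field_simp
  ring

end Helpers

/-- Example 1.1, asymptotics of the coefficient: with
`f(x) = 0` for `|x| < k` and `f(x) = (|x|-k)^ζ` for `|x| ≥ k`, the coefficient
`γ_a = (α + (1/√a) ∫₀ʰ f(y) sinh((h-y)/√a) dy) / cosh(h/√a)` satisfies
`γ_a ~ Γ(1+ζ) a^{ζ/2} e^{-k/√a}` as `a → 0⁺`. -/
theorem stmt5 (h α k ζ : ℝ) (hh : 0 < h) (hα : 0 < α) (hk0 : 0 < k) (hkh : k < h)
    (hζ : 0 ≤ ζ)
    (f : ℝ → ℝ) (hf : ∀ x : ℝ, f x = if |x| < k then 0 else (|x| - k) ^ ζ)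
    (γ : ℝ → ℝ)
    (hγ : ∀ a : ℝ, 0 < a → γ a =
      (α + (1 / Real.sqrt a) *
        ∫ y in (0 : ℝ)..h, f y * Real.sinh ((h - y) / Real.sqrt a)) /
      Real.cosh (h / Real.sqrt a)) :
    Tendsto (fun a : ℝ =>
        γ a / (Real.Gamma (1 + ζ) * a ^ (ζ / 2) * Real.exp (-k / Real.sqrt a)))
      (𝓝[>] (0 : ℝ)) (𝓝 1) := by
  have hsqrt : Tendsto Real.sqrt (𝓝[>] (0:ℝ)) (𝓝[>] (0:ℝ)) := by
    rw [tendsto_nhdsWithin_iff]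
    constructor
    · have := (Real.continuous_sqrt.tendsto 0).mono_left (nhdsWithin_le_nhds (s := Ioi (0:ℝ)))
      simpa using this
    · filter_upwards [self_mem_nhdsWithin] with a (ha : 0 < a)
      exact Real.sqrt_pos.2 ha
  have main := (main_eps h α k ζ hh hα hk0 hkh hζ f hf).comp hsqrt
  refine main.congr' ?_
  filter_upwards [self_mem_nhdsWithin] with a (ha : 0 < a)
  have hrpow : a ^ (ζ / 2) = Real.sqrt a ^ ζ := by
    rw [Real.sqrt_eq_rpow, ← Real.rpow_mul ha.le]
    ring_nf
  simp only [Function.comp_apply, hγ a ha, hrpow]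
end
end

section
/- Let a, h, α > 0, 0 < k < h, ζ ≥ 0, and f(x) := 0 for |x| < k and f(x) := (|x| − k)^ζ for k ≤ |x| < h. Let u_a be the unique solution of −a·u_a'' + u_a = f on (−h, h) with u_a(−h) = u_a(h) = α. Then, uniformly on [−k, k], −√a·log u_a(x) = (k − |x|) + O(√a·log(1/a)) as a → 0⁺; that is, there exist C > 0 and a₀ > 0 such that sup_{|x|≤k} | −√a·log u_a(x) − (k − |x|) | ≤ C·√a·log(1/a) for all 0 < a < a₀. -/
open Set Filter Real
open scoped Topology

noncomputable section

lemma max_principle (a p q : ℝ) (ha : 0 < a) (w w' w'' : ℝ → ℝ)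
    (hc : ContinuousOn w (Icc p q))
    (hd1 : ∀ x ∈ Ioo p q, HasDerivAt w (w' x) x)
    (hd2 : ∀ x ∈ Ioo p q, HasDerivAt w' (w'' x) x)
    (hineq : ∀ x ∈ Ioo p q, w x ≤ a * w'' x)
    (hp : w p ≤ 0) (hq : w q ≤ 0) : ∀ x ∈ Icc p q, w x ≤ 0 := by
  by_contra hcon
  push_neg at hcon
  obtain ⟨x₀, hx₀, hx₀pos⟩ := hcon
  have hpq : p ≤ q := le_trans hx₀.1 hx₀.2
  obtain ⟨c, hcmem, hcmax⟩ := isCompact_Icc.exists_isMaxOn ⟨x₀, hx₀⟩ hc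
  have hwc : 0 < w c := lt_of_lt_of_le hx₀pos (hcmax hx₀)
  have hcp : p < c := lt_of_le_of_ne hcmem.1 (by rintro rfl; linarith)
  have hcq : c < q := lt_of_le_of_ne hcmem.2 (by rintro h'; rw [h'] at hwc; linarith)
  have hcIoo : c ∈ Ioo p q := ⟨hcp, hcq⟩
  have hlm : IsLocalMax w c := hcmax.isLocalMax (Icc_mem_nhds hcp hcq)
  have hw'c : w' c = 0 := hlm.hasDerivAt_eq_zero (hd1 c hcIoo)
  have hw''pos : 0 < w'' c := by
    by_contra hle
    push_neg at hle
    have h2 := mul_nonpos_of_nonneg_of_nonpos ha.le hle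
    linarith [hineq c hcIoo]
  have hslope : Tendsto (slope w' c) (𝓝[≠] c) (𝓝 (w'' c)) :=
    hasDerivAt_iff_tendsto_slope.mp (hd2 c hcIoo)
  have hev : ∀ᶠ x in 𝓝[≠] c, 0 < slope w' c x := hslope.eventually (eventually_gt_nhds hw''pos)
  have hev' : ∀ᶠ x in 𝓝[>] c, 0 < slope w' c x :=
    hev.filter_mono (nhdsWithin_mono c (fun x hx => ne_of_gt hx))
  obtain ⟨d', hd'mem, hd'sub⟩ := mem_nhdsGT_iff_exists_Ioo_subset.mp hev'
  set e := min d' q with he_def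
  have hce : c < e := lt_min hd'mem hcq
  set m := (c + e) / 2 with hm_def
  have hcm : c < m := by simp [hm_def]; linarith
  have hme : m < e := by simp [hm_def]; linarith
  have hmono : StrictMonoOn w (Icc c m) := by
    apply strictMonoOn_of_deriv_pos (convex_Icc c m)
    · exact hc.mono (Icc_subset_Icc hcmem.1 (le_trans hme.le (min_le_right _ _)))
    · intro x hx
      rw [interior_Icc] at hx
      have hxIoo : x ∈ Ioo p q := ⟨lt_trans hcp hx.1, lt_of_lt_of_le (lt_trans hx.2 hme) (min_le_right _ _)⟩
      rw [(hd1 x hxIoo).deriv]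
      have hxd' : x ∈ Ioo c d' := ⟨hx.1, lt_of_lt_of_le (lt_trans hx.2 hme) (min_le_left _ _)⟩
      have hsl : 0 < slope w' c x := hd'sub hxd'
      rw [slope_def_field] at hsl
      have hxc : 0 < x - c := by linarith [hx.1]
      have hmul := mul_pos hsl hxc
      rw [div_mul_cancel₀] at hmul
      · rw [hw'c] at hmul; linarith
      · exact ne_of_gt hxc
  have hwm : w c < w m := hmono (left_mem_Icc.mpr hcm.le) (right_mem_Icc.mpr hcm.le) hcm
  have hmmem : m ∈ Icc p q := ⟨le_trans hcmem.1 hcm.le, le_trans hme.le (min_le_right _ _)⟩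
  exact absurd (hcmax hmmem) (not_le.mpr hwm)

lemma bar_hasDeriv1 (s c A B : ℝ) (hs : s ≠ 0) (x : ℝ) :
    HasDerivAt (fun y => c + A * Real.exp (y/s) + B * Real.exp (-(y/s)))
      ((A * Real.exp (x/s) - B * Real.exp (-(x/s))) / s) x := by
  have h1 : HasDerivAt (fun y : ℝ => Real.exp (y/s)) (Real.exp (x/s) * (1/s)) x :=
    ((hasDerivAt_id x).div_const s).exp
  have h2 : HasDerivAt (fun y : ℝ => Real.exp (-(y/s))) (Real.exp (-(x/s)) * (-(1/s))) x :=
    ((hasDerivAt_id x).div_const s).neg.exp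
  have := ((hasDerivAt_const x c).add (h1.const_mul A)).add (h2.const_mul B)
  refine this.congr_deriv ?_
  ring

lemma bar_hasDeriv2 (s A B : ℝ) (hs : s ≠ 0) (x : ℝ) :
    HasDerivAt (fun y => (A * Real.exp (y/s) - B * Real.exp (-(y/s))) / s)
      ((A * Real.exp (x/s) + B * Real.exp (-(x/s))) / (s * s)) x := by
  have h1 : HasDerivAt (fun y : ℝ => Real.exp (y/s)) (Real.exp (x/s) * (1/s)) x :=
    ((hasDerivAt_id x).div_const s).exp
  have h2 : HasDerivAt (fun y : ℝ => Real.exp (-(y/s))) (Real.exp (-(x/s)) * (-(1/s))) x :=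
    ((hasDerivAt_id x).div_const s).neg.exp
  have := (((h1.const_mul A).sub (h2.const_mul B)).div_const s)
  refine this.congr_deriv ?_
  ring

lemma comp_lower (a s p q c A B : ℝ) (hs : 0 < s) (has : a = s * s)
    (v v' v'' f : ℝ → ℝ)
    (hc : ContinuousOn v (Icc p q))
    (hd1 : ∀ x ∈ Ioo p q, HasDerivAt v (v' x) x)
    (hd2 : ∀ x ∈ Ioo p q, HasDerivAt v' (v'' x) x)
    (heq : ∀ x ∈ Ioo p q, -a * v'' x + v x = f x)
    (hfc : ∀ x ∈ Ioo p q, c ≤ f x)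
    (hbp : c + A * Real.exp (p/s) + B * Real.exp (-(p/s)) ≤ v p)
    (hbq : c + A * Real.exp (q/s) + B * Real.exp (-(q/s)) ≤ v q) :
    ∀ x ∈ Icc p q, c + A * Real.exp (x/s) + B * Real.exp (-(x/s)) ≤ v x := by
  have ha : 0 < a := has ▸ mul_pos hs hs
  have hkey := max_principle a p q ha
    (fun x => (c + A * Real.exp (x/s) + B * Real.exp (-(x/s))) - v x)
    (fun x => (A * Real.exp (x/s) - B * Real.exp (-(x/s))) / s - v' x)
    (fun x => (A * Real.exp (x/s) + B * Real.exp (-(x/s))) / (s * s) - v'' x)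
    (by
      apply ContinuousOn.sub _ hc
      apply Continuous.continuousOn
      fun_prop)
    (fun x hx => (bar_hasDeriv1 s c A B (ne_of_gt hs) x).sub (hd1 x hx))
    (fun x hx => (bar_hasDeriv2 s A B (ne_of_gt hs) x).sub (hd2 x hx))
    (fun x hx => by
      have h1 : a * ((A * Real.exp (x/s) + B * Real.exp (-(x/s))) / (s * s))
          = A * Real.exp (x/s) + B * Real.exp (-(x/s)) := by
        rw [has]; field_simp
      have h2 := heq x hx
      have h3 := hfc x hx
      rw [mul_sub, h1]
      linarith)
    (by linarith) (by linarith)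
  intro x hx
  have := hkey x hx
  linarith

lemma comp_upper (a s p q c A B : ℝ) (hs : 0 < s) (has : a = s * s)
    (v v' v'' f : ℝ → ℝ)
    (hc : ContinuousOn v (Icc p q))
    (hd1 : ∀ x ∈ Ioo p q, HasDerivAt v (v' x) x)
    (hd2 : ∀ x ∈ Ioo p q, HasDerivAt v' (v'' x) x)
    (heq : ∀ x ∈ Ioo p q, -a * v'' x + v x = f x)
    (hfc : ∀ x ∈ Ioo p q, f x ≤ c)
    (hbp : v p ≤ c + A * Real.exp (p/s) + B * Real.exp (-(p/s)))
    (hbq : v q ≤ c + A * Real.exp (q/s) + B * Real.exp (-(q/s))) :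
    ∀ x ∈ Icc p q, v x ≤ c + A * Real.exp (x/s) + B * Real.exp (-(x/s)) := by
  have ha : 0 < a := has ▸ mul_pos hs hs
  have hkey := max_principle a p q ha
    (fun x => v x - (c + A * Real.exp (x/s) + B * Real.exp (-(x/s))))
    (fun x => v' x - (A * Real.exp (x/s) - B * Real.exp (-(x/s))) / s)
    (fun x => v'' x - (A * Real.exp (x/s) + B * Real.exp (-(x/s))) / (s * s))
    (by
      apply hc.sub
      apply Continuous.continuousOn
      fun_prop)
    (fun x hx => (hd1 x hx).sub (bar_hasDeriv1 s c A B (ne_of_gt hs) x))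
    (fun x hx => (hd2 x hx).sub (bar_hasDeriv2 s A B (ne_of_gt hs) x))
    (fun x hx => by
      have h1 : a * ((A * Real.exp (x/s) + B * Real.exp (-(x/s))) / (s * s))
          = A * Real.exp (x/s) + B * Real.exp (-(x/s)) := by
        rw [has]; field_simp
      have h2 := heq x hx
      have h3 := hfc x hx
      rw [mul_sub, h1]
      linarith)
    (by linarith) (by linarith)
  intro x hx
  have := hkey x hx
  linarith

set_option maxHeartbeats 4000000 in
/-- Example 1.1, conclusion: for the solutions `u_a` of `-a u'' + u = f` on `(-h,h)`,
`u_a(±h) = α`, with `f(x) = 0` for `|x| < k` and `f(x) = (|x|-k)^ζ` for `|x| ≥ k`,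
one has `-√a log u_a(x) = (k - |x|) + O(√a log(1/a))` uniformly on `[-k,k]`. -/
theorem stmt6 (h α k ζ : ℝ) (hh : 0 < h) (hα : 0 < α) (hk0 : 0 < k) (hkh : k < h)
    (hζ : 0 ≤ ζ)
    (f : ℝ → ℝ) (hf : ∀ x : ℝ, f x = if |x| < k then 0 else (|x| - k) ^ ζ)
    (u u' u'' : ℝ → ℝ → ℝ)
    (hucont : ∀ a : ℝ, 0 < a → ContinuousOn (u a) (Icc (-h) h))
    (hu : ∀ a : ℝ, 0 < a → ∀ x ∈ Ioo (-h) h, HasDerivAt (u a) (u' a x) x)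
    (hu' : ∀ a : ℝ, 0 < a → ∀ x ∈ Ioo (-h) h, HasDerivAt (u' a) (u'' a x) x)
    (heq : ∀ a : ℝ, 0 < a → ∀ x ∈ Ioo (-h) h, -a * u'' a x + u a x = f x)
    (hbcl : ∀ a : ℝ, 0 < a → u a (-h) = α) (hbcr : ∀ a : ℝ, 0 < a → u a h = α) :
    ∃ C : ℝ, 0 < C ∧ ∃ a₀ : ℝ, 0 < a₀ ∧ ∀ a : ℝ, 0 < a → a < a₀ →
      ∀ x : ℝ, |x| ≤ k →
        |(-Real.sqrt a * Real.log (u a x)) - (k - |x|)|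
          ≤ C * Real.sqrt a * Real.log (1 / a) := by
  have hexpmul : Real.exp (-1) * Real.exp 1 = 1 := by
    rw [← Real.exp_add]; norm_num
  have hc₁ : (0:ℝ) < 1 - 2 * Real.exp (-1) := by
    nlinarith [Real.exp_one_gt_d9, Real.exp_pos (-1), hexpmul]
  set c₁ : ℝ := 1 - 2 * Real.exp (-1) with hc₁def
  set M : ℝ := max α ((h - k) ^ ζ) with hMdef
  have hM0 : 0 < M := lt_of_lt_of_le hα (le_max_left _ _)
  refine ⟨3 + ζ + |Real.log c₁| + |Real.log (2*M)|,
    by have := abs_nonneg (Real.log c₁); have := abs_nonneg (Real.log (2*M)); linarith,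
    min (Real.exp (-1)) (((h-k)/3)^2),
    lt_min (Real.exp_pos _) (pow_pos (by linarith) 2), ?_⟩
  intro a ha ha0 x hxk
  have has0 : a < Real.exp (-1) := lt_of_lt_of_le ha0 (min_le_left _ _)
  have has1 : a < ((h-k)/3)^2 := lt_of_lt_of_le ha0 (min_le_right _ _)
  set s := Real.sqrt a with hsdef
  have hs : 0 < s := Real.sqrt_pos.mpr ha
  have hs' : s ≠ 0 := ne_of_gt hs
  have has : a = s * s := by rw [hsdef, Real.mul_self_sqrt ha.le]
  have h3s : 3 * s < h - k := by
    have h1 : s < (h-k)/3 := by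
      rw [hsdef]
      calc Real.sqrt a < Real.sqrt (((h-k)/3)^2) := Real.sqrt_lt_sqrt ha.le has1
      _ = (h-k)/3 := Real.sqrt_sq (by linarith)
    linarith
  have hL : 1 ≤ Real.log (1/a) := by
    rw [Real.le_log_iff_exp_le (by positivity)]
    rw [le_div_iff₀ ha]
    nlinarith [Real.exp_pos 1]
  have hsz : 0 < s ^ ζ := Real.rpow_pos_of_pos hs ζ
  -- nonnegativity of f
  have hfnn : ∀ y : ℝ, 0 ≤ f y := by
    intro y
    rw [hf y]
    split_ifs with hy
    · exact le_refl 0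
    · exact Real.rpow_nonneg (by linarith [not_lt.mp hy]) ζ
  -- Step 1: u ≥ 0 on [-h,h]
  have hnn0 := comp_lower a s (-h) h 0 0 0 hs has (u a) (u' a) (u'' a) f
    (hucont a ha) (hu a ha) (hu' a ha) (heq a ha)
    (fun y _ => hfnn y)
    (by rw [hbcl a ha]; simp; linarith)
    (by rw [hbcr a ha]; simp; linarith)
  have hnn : ∀ y ∈ Icc (-h) h, 0 ≤ u a y := by
    intro y hy
    have := hnn0 y hy
    simpa using this
  -- Step 2: u ≤ M on [-h,h]
  have hMb0 := comp_upper a s (-h) h M 0 0 hs has (u a) (u' a) (u'' a) f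
    (hucont a ha) (hu a ha) (hu' a ha) (heq a ha)
    (fun y hy => by
      rw [hf y]
      split_ifs with hy2
      · exact hM0.le
      · refine le_trans (Real.rpow_le_rpow (by linarith [not_lt.mp hy2]) ?_ hζ) (le_max_right α _)
        have : |y| < h := abs_lt.mpr ⟨hy.1, hy.2⟩
        linarith)
    (by rw [hbcl a ha]; simp; exact le_max_left _ _)
    (by rw [hbcr a ha]; simp; exact le_max_left _ _)
  have hMb : ∀ y ∈ Icc (-h) h, u a y ≤ M := by
    intro y hy
    have := hMb0 y hy
    simpa using this
  -- Step 3: right barrier on [k+s, h], conclusion at k+2s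
  have hbr := comp_lower a s (k+s) h (s^ζ) (-(s^ζ * Real.exp (-(h/s)))) (-(s^ζ * Real.exp ((k+s)/s)))
    hs has (u a) (u' a) (u'' a) f
    ((hucont a ha).mono (Icc_subset_Icc (by linarith) le_rfl))
    (fun y hy => hu a ha y ⟨by linarith [hy.1], hy.2⟩)
    (fun y hy => hu' a ha y ⟨by linarith [hy.1], hy.2⟩)
    (fun y hy => heq a ha y ⟨by linarith [hy.1], hy.2⟩)
    (fun y hy => by
      have hy1 : k + s < y := hy.1
      have hyabs : |y| = y := abs_of_pos (by linarith)
      rw [hf y, if_neg (by rw [hyabs]; push_neg; linarith), hyabs]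
      exact Real.rpow_le_rpow hs.le (by linarith) hζ)
    (by
      have E2 : s^ζ * (Real.exp ((k+s)/s) * Real.exp (-((k+s)/s))) = s^ζ := by
        rw [← Real.exp_add, show (k+s)/s + -((k+s)/s) = 0 from by ring, Real.exp_zero, mul_one]
      have hXY : 0 ≤ s^ζ * (Real.exp (-(h/s)) * Real.exp ((k+s)/s)) := by positivity
      have hun := hnn (k+s) ⟨by linarith, by linarith⟩
      linarith [E2, hXY, hun])
    (by
      have E1 : s^ζ * (Real.exp (-(h/s)) * Real.exp (h/s)) = s^ζ := by
        rw [← Real.exp_add, show -(h/s) + h/s = 0 from by ring, Real.exp_zero, mul_one]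
      have hYZ : 0 ≤ s^ζ * (Real.exp ((k+s)/s) * Real.exp (-(h/s))) := by positivity
      rw [hbcr a ha]
      linarith [E1, hYZ, hα])
  have hr := hbr (k+2*s) ⟨by linarith, by linarith⟩
  have E5 : Real.exp ((k+2*s-h)/s) ≤ Real.exp (-1) := by
    apply Real.exp_le_exp.mpr
    rw [div_le_iff₀ hs]
    linarith
  have hur : c₁ * s^ζ ≤ u a (k+2*s) := by
    have E3 : s^ζ * (Real.exp (-(h/s)) * Real.exp ((k+2*s)/s)) = s^ζ * Real.exp ((k+2*s-h)/s) := by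
      rw [← Real.exp_add, show -(h/s) + (k+2*s)/s = (k+2*s-h)/s from by ring]
    have E4 : s^ζ * (Real.exp ((k+s)/s) * Real.exp (-((k+2*s)/s))) = s^ζ * Real.exp (-1) := by
      rw [← Real.exp_add, show (k+s)/s + -((k+2*s)/s) = -1 from by field_simp; ring]
    have E5' : s^ζ * Real.exp ((k+2*s-h)/s) ≤ s^ζ * Real.exp (-1) :=
      mul_le_mul_of_nonneg_left E5 hsz.le
    rw [hc₁def]
    linarith [hr, E3, E4, E5']
  -- Step 4: left barrier on [-h, -(k+s)], conclusion at -(k+2s)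
  have hbl := comp_lower a s (-h) (-(k+s)) (s^ζ) (-(s^ζ * Real.exp ((k+s)/s))) (-(s^ζ * Real.exp (-(h/s))))
    hs has (u a) (u' a) (u'' a) f
    ((hucont a ha).mono (Icc_subset_Icc le_rfl (by linarith)))
    (fun y hy => hu a ha y ⟨hy.1, by linarith [hy.2]⟩)
    (fun y hy => hu' a ha y ⟨hy.1, by linarith [hy.2]⟩)
    (fun y hy => heq a ha y ⟨hy.1, by linarith [hy.2]⟩)
    (fun y hy => by
      have hy2 : y < -(k+s) := hy.2
      have hyabs : |y| = -y := abs_of_neg (by linarith)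
      rw [hf y, if_neg (by rw [hyabs]; push_neg; linarith), hyabs]
      exact Real.rpow_le_rpow hs.le (by linarith) hζ)
    (by
      have E1 : s^ζ * (Real.exp (-(h/s)) * Real.exp (-(-h/s))) = s^ζ := by
        rw [← Real.exp_add, show -(h/s) + -(-h/s) = 0 from by ring, Real.exp_zero, mul_one]
      have hXY : 0 ≤ s^ζ * (Real.exp ((k+s)/s) * Real.exp (-h/s)) := by positivity
      rw [hbcl a ha]
      linarith [E1, hXY, hα])
    (by
      have E2 : s^ζ * (Real.exp ((k+s)/s) * Real.exp (-(k+s)/s)) = s^ζ := by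
        rw [← Real.exp_add, show (k+s)/s + -(k+s)/s = 0 from by ring, Real.exp_zero, mul_one]
      have hYZ : 0 ≤ s^ζ * (Real.exp (-(h/s)) * Real.exp (-(-(k+s)/s))) := by positivity
      have hun := hnn (-(k+s)) ⟨by linarith, by linarith⟩
      linarith [E2, hYZ, hun])
  have hl := hbl (-(k+2*s)) ⟨by linarith, by linarith⟩
  have hul : c₁ * s^ζ ≤ u a (-(k+2*s)) := by
    have E3 : s^ζ * (Real.exp ((k+s)/s) * Real.exp (-(k+2*s)/s)) = s^ζ * Real.exp (-1) := by
      rw [← Real.exp_add, show (k+s)/s + -(k+2*s)/s = -1 from by field_simp; ring]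
    have E4 : s^ζ * (Real.exp (-(h/s)) * Real.exp (-(-(k+2*s)/s))) = s^ζ * Real.exp ((k+2*s-h)/s) := by
      rw [← Real.exp_add, show -(h/s) + -(-(k+2*s)/s) = (k+2*s-h)/s from by ring]
    have E5' : s^ζ * Real.exp ((k+2*s-h)/s) ≤ s^ζ * Real.exp (-1) :=
      mul_le_mul_of_nonneg_left E5 hsz.le
    rw [hc₁def]
    linarith [hl, E3, E4, E5']
  -- Step 5: final lower barrier on [-(k+2s), k+2s]
  have hβ : 0 < c₁ * s^ζ / 2 := div_pos (mul_pos hc₁ hsz) two_pos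
  have hbf := comp_lower a s (-(k+2*s)) (k+2*s) 0
    (c₁ * s^ζ / 2 * Real.exp (-((k+2*s)/s))) (c₁ * s^ζ / 2 * Real.exp (-((k+2*s)/s)))
    hs has (u a) (u' a) (u'' a) f
    ((hucont a ha).mono (Icc_subset_Icc (by linarith) (by linarith)))
    (fun y hy => hu a ha y ⟨by linarith [hy.1], by linarith [hy.2]⟩)
    (fun y hy => hu' a ha y ⟨by linarith [hy.1], by linarith [hy.2]⟩)
    (fun y hy => heq a ha y ⟨by linarith [hy.1], by linarith [hy.2]⟩)
    (fun y _ => hfnn y)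
    (by
      have F1 : c₁ * s^ζ / 2 * (Real.exp (-((k+2*s)/s)) * Real.exp (-(k+2*s)/s)) ≤ c₁ * s^ζ / 2 := by
        have : Real.exp (-((k+2*s)/s)) * Real.exp (-(k+2*s)/s) ≤ 1 := by
          rw [← Real.exp_add]
          apply Real.exp_le_one_iff.mpr
          have h0 : 0 ≤ (k+2*s)/s := by positivity
          have h0' : -(k+2*s)/s = -((k+2*s)/s) := by ring
          rw [h0']; linarith
        exact mul_le_of_le_one_right hβ.le this
      have F2 : c₁ * s^ζ / 2 * (Real.exp (-((k+2*s)/s)) * Real.exp (-(-(k+2*s)/s))) = c₁ * s^ζ / 2 := by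
        rw [← Real.exp_add, show -((k+2*s)/s) + -(-(k+2*s)/s) = 0 from by ring, Real.exp_zero, mul_one]
      calc 0 + c₁ * s^ζ / 2 * Real.exp (-((k+2*s)/s)) * Real.exp (-(k+2*s)/s)
            + c₁ * s^ζ / 2 * Real.exp (-((k+2*s)/s)) * Real.exp (-(-(k+2*s)/s))
          = c₁ * s^ζ / 2 * (Real.exp (-((k+2*s)/s)) * Real.exp (-(k+2*s)/s))
            + c₁ * s^ζ / 2 * (Real.exp (-((k+2*s)/s)) * Real.exp (-(-(k+2*s)/s))) := by ring
        _ ≤ c₁ * s^ζ / 2 + c₁ * s^ζ / 2 := add_le_add F1 (le_of_eq F2)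
        _ = c₁ * s^ζ := by ring
        _ ≤ u a (-(k+2*s)) := hul)
    (by
      have F1 : c₁ * s^ζ / 2 * (Real.exp (-((k+2*s)/s)) * Real.exp (-((k+2*s)/s))) ≤ c₁ * s^ζ / 2 := by
        have : Real.exp (-((k+2*s)/s)) * Real.exp (-((k+2*s)/s)) ≤ 1 := by
          rw [← Real.exp_add]
          apply Real.exp_le_one_iff.mpr
          have h0 : 0 ≤ (k+2*s)/s := by positivity
          linarith
        exact mul_le_of_le_one_right hβ.le this
      have F2 : c₁ * s^ζ / 2 * (Real.exp (-((k+2*s)/s)) * Real.exp ((k+2*s)/s)) = c₁ * s^ζ / 2 := by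
        rw [← Real.exp_add, show -((k+2*s)/s) + (k+2*s)/s = 0 from by ring, Real.exp_zero, mul_one]
      calc 0 + c₁ * s^ζ / 2 * Real.exp (-((k+2*s)/s)) * Real.exp ((k+2*s)/s)
            + c₁ * s^ζ / 2 * Real.exp (-((k+2*s)/s)) * Real.exp (-((k+2*s)/s))
          = c₁ * s^ζ / 2 * (Real.exp (-((k+2*s)/s)) * Real.exp ((k+2*s)/s))
            + c₁ * s^ζ / 2 * (Real.exp (-((k+2*s)/s)) * Real.exp (-((k+2*s)/s))) := by ring
        _ ≤ c₁ * s^ζ / 2 + c₁ * s^ζ / 2 := add_le_add (le_of_eq F2) F1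
        _ = c₁ * s^ζ := by ring
        _ ≤ u a (k+2*s) := hur)
  have hbx := hbf x ⟨by cases abs_le.mp hxk with | intro h1 h2 => linarith, by cases abs_le.mp hxk with | intro h1 h2 => linarith⟩
  have hlow : c₁ * s^ζ / 2 * Real.exp ((|x| - (k+2*s))/s) ≤ u a x := by
    rcases le_or_gt 0 x with hx0 | hx0
    · have hxabs : |x| = x := abs_of_nonneg hx0
      have G : c₁ * s^ζ / 2 * (Real.exp (-((k+2*s)/s)) * Real.exp (x/s))
          = c₁ * s^ζ / 2 * Real.exp ((x - (k+2*s))/s) := by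
        rw [← Real.exp_add, show -((k+2*s)/s) + x/s = (x - (k+2*s))/s from by ring]
      have hpos2 : 0 ≤ c₁ * s^ζ / 2 * (Real.exp (-((k+2*s)/s)) * Real.exp (-(x/s))) := mul_nonneg hβ.le (by positivity)
      rw [hxabs]
      linarith [hbx, G, hpos2]
    · have hxabs : |x| = -x := abs_of_neg hx0
      have G : c₁ * s^ζ / 2 * (Real.exp (-((k+2*s)/s)) * Real.exp (-(x/s)))
          = c₁ * s^ζ / 2 * Real.exp ((-x - (k+2*s))/s) := by
        rw [← Real.exp_add, show -((k+2*s)/s) + -(x/s) = (-x - (k+2*s))/s from by ring]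
      have hpos2 : 0 ≤ c₁ * s^ζ / 2 * (Real.exp (-((k+2*s)/s)) * Real.exp (x/s)) := mul_nonneg hβ.le (by positivity)
      rw [hxabs]
      linarith [hbx, G, hpos2]
  -- Step 6: upper barrier on [-k, k]
  have hbu := comp_upper a s (-k) k 0 (M * Real.exp (-(k/s))) (M * Real.exp (-(k/s)))
    hs has (u a) (u' a) (u'' a) f
    ((hucont a ha).mono (Icc_subset_Icc (by linarith) (by linarith)))
    (fun y hy => hu a ha y ⟨by linarith [hy.1], by linarith [hy.2]⟩)
    (fun y hy => hu' a ha y ⟨by linarith [hy.1], by linarith [hy.2]⟩)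
    (fun y hy => heq a ha y ⟨by linarith [hy.1], by linarith [hy.2]⟩)
    (fun y hy => by rw [hf y, if_pos (abs_lt.mpr ⟨hy.1, hy.2⟩)])
    (by
      have F2 : M * (Real.exp (-(k/s)) * Real.exp (-(-k/s))) = M := by
        rw [← Real.exp_add, show -(k/s) + -(-k/s) = 0 from by ring, Real.exp_zero, mul_one]
      have hpos2 : 0 ≤ M * (Real.exp (-(k/s)) * Real.exp (-k/s)) := mul_nonneg hM0.le (by positivity)
      have hub := hMb (-k) ⟨by linarith, by linarith⟩
      linarith [F2, hpos2, hub])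
    (by
      have F2 : M * (Real.exp (-(k/s)) * Real.exp (k/s)) = M := by
        rw [← Real.exp_add, show -(k/s) + k/s = 0 from by ring, Real.exp_zero, mul_one]
      have hpos2 : 0 ≤ M * (Real.exp (-(k/s)) * Real.exp (-(k/s))) := mul_nonneg hM0.le (by positivity)
      have hub := hMb k ⟨by linarith, by linarith⟩
      linarith [F2, hpos2, hub])
  have hux := hbu x ⟨(abs_le.mp hxk).1, (abs_le.mp hxk).2⟩
  have hup : u a x ≤ 2 * M * Real.exp ((|x| - k)/s) := by
    have K1 : M * (Real.exp (-(k/s)) * Real.exp (x/s)) = M * Real.exp ((x - k)/s) := by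
      rw [← Real.exp_add, show -(k/s) + x/s = (x - k)/s from by ring]
    have K2 : M * (Real.exp (-(k/s)) * Real.exp (-(x/s))) = M * Real.exp ((-x - k)/s) := by
      rw [← Real.exp_add, show -(k/s) + -(x/s) = (-x - k)/s from by ring]
    have K3 : M * Real.exp ((x - k)/s) ≤ M * Real.exp ((|x| - k)/s) := by
      apply mul_le_mul_of_nonneg_left _ hM0.le
      apply Real.exp_le_exp.mpr
      have := le_abs_self x
      apply div_le_div_of_nonneg_right _ hs.le
      linarith
    have K4 : M * Real.exp ((-x - k)/s) ≤ M * Real.exp ((|x| - k)/s) := by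
      apply mul_le_mul_of_nonneg_left _ hM0.le
      apply Real.exp_le_exp.mpr
      have := neg_abs_le x
      apply div_le_div_of_nonneg_right _ hs.le
      linarith
    linarith [hux, K1, K2, K3, K4]
  -- Logs
  have hupos : 0 < u a x := lt_of_lt_of_le (mul_pos hβ (Real.exp_pos _)) hlow
  have hlog_up : Real.log (u a x) ≤ Real.log (2*M) + (|x| - k)/s := by
    have := Real.log_le_log hupos hup
    rwa [Real.log_mul (ne_of_gt (mul_pos two_pos hM0)) (Real.exp_ne_zero _), Real.log_exp] at this
  have hlog_lo : Real.log (c₁ * s^ζ / 2) + (|x| - (k+2*s))/s ≤ Real.log (u a x) := by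
    have := Real.log_le_log (mul_pos hβ (Real.exp_pos _)) hlow
    rwa [Real.log_mul (ne_of_gt hβ) (Real.exp_ne_zero _), Real.log_exp] at this
  have hlogβ : Real.log (c₁ * s^ζ / 2) = Real.log c₁ + ζ * Real.log s - Real.log 2 := by
    rw [Real.log_div (ne_of_gt (mul_pos hc₁ hsz)) (by norm_num), Real.log_mul (ne_of_gt hc₁) (ne_of_gt hsz),
      Real.log_rpow hs]
  have hlogs : Real.log s = Real.log a / 2 := by rw [hsdef]; exact Real.log_sqrt ha.le
  have hlogA : Real.log (1/a) = -Real.log a := by rw [one_div, Real.log_inv]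
  have hlog2 : Real.log 2 ≤ 1 := by linarith [Real.log_two_lt_d9]
  have hsL0 : 0 ≤ s * Real.log (1/a) := mul_nonneg hs.le (by linarith)
  have hsL1 : s ≤ s * Real.log (1/a) := le_mul_of_one_le_right hs.le hL
  rw [abs_le]
  constructor
  · -- lower bound
    have m1 := mul_le_mul_of_nonneg_left hlog_up hs.le
    have d1 : s * ((|x| - k)/s) = |x| - k := by field_simp
    rw [mul_add, d1] at m1
    have h1 : s * Real.log (2*M) ≤ s * |Real.log (2*M)| :=
      mul_le_mul_of_nonneg_left (le_abs_self _) hs.le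
    have h2 : s * |Real.log (2*M)| ≤ (s * Real.log (1/a)) * |Real.log (2*M)| :=
      mul_le_mul_of_nonneg_right hsL1 (abs_nonneg _)
    linarith [m1, h1, h2, hsL0, mul_nonneg hsL0 (abs_nonneg (Real.log c₁)), mul_nonneg hsL0 hζ]
  · -- upper bound
    have m2 := mul_le_mul_of_nonneg_left hlog_lo hs.le
    have d2 : s * ((|x| - (k+2*s))/s) = |x| - (k+2*s) := by field_simp
    rw [mul_add, d2] at m2
    have eβ : s * Real.log (c₁ * s^ζ / 2)
        = s * Real.log c₁ - (ζ/2) * (s * Real.log (1/a)) - s * Real.log 2 := by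
      rw [hlogβ, hlogs, show Real.log a = -Real.log (1/a) from by rw [hlogA]; ring]
      ring
    have h1 : s * (-|Real.log c₁|) ≤ s * Real.log c₁ :=
      mul_le_mul_of_nonneg_left (neg_abs_le _) hs.le
    have h2 : s * |Real.log c₁| ≤ (s * Real.log (1/a)) * |Real.log c₁| :=
      mul_le_mul_of_nonneg_right hsL1 (abs_nonneg _)
    have h3 : s * Real.log 2 ≤ s := by
      have := mul_le_mul_of_nonneg_left hlog2 hs.le
      linarith
    have h4 : (ζ/2) * (s * Real.log (1/a)) ≤ ζ * (s * Real.log (1/a)) :=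
      mul_le_mul_of_nonneg_right (by linarith) hsL0
    linarith [m2, eβ, h1, h2, h3, h4, hsL1, mul_nonneg hsL0 (abs_nonneg (Real.log (2*M)))]
end
end

section
/- Let A := B₁(0) ⊂ ℝ^N be the open unit ball, ζ ≥ 0, and f(x) := (max{|x|² − 1, 0})^ζ. Then for each p ∈ {1, 2} there exist constants 0 < c_p < C_p such that c_p·ε^{pζ} ≤ m_ε^y(f^p) ≤ C_p·ε^{pζ} for all sufficiently small ε > 0 and all y on the unit sphere ∂B₁(0); in particular, f satisfies 0 < inf_{0<ε<ε₀, y∈∂A} ε^{−ζp} m_ε^y(f^p) ≤ sup_{0<ε<ε₀, y∈∂A} ε^{−ζp} m_ε^y(f^p) < ∞ for some ε₀ > 0. -/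
open MeasureTheory Metric Set Filter Real
open scoped Topology ENNReal NNReal

noncomputable section

/-- `N`-dimensional Euclidean space. -/
abbrev Euc (N : ℕ) := EuclideanSpace ℝ (Fin N)

/-- Volume mean `m_ε^y(h)` of `h` over the ball `B_ε(y)`. -/
def vmean {N : ℕ} (ε : ℝ) (y : Euc N) (h : Euc N → ℝ) : ℝ :=
  ((volume (ball y ε)).toReal)⁻¹ * ∫ x in ball y ε, h x

-- Auxiliary two-sided bound.
lemma key {N : ℕ} (hN : 1 ≤ N) (κ : ℝ) (hκ : 0 ≤ κ)
    {ε : ℝ} (hε : 0 < ε) (hε1 : ε < 1) {y : Euc N} (hy : ‖y‖ = 1) :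
    ((8:ℝ)⁻¹) ^ N * ((2:ℝ)⁻¹) ^ κ * ε ^ κ
      ≤ vmean ε y (fun x => max (‖x‖ ^ 2 - 1) 0 ^ κ) ∧
    vmean ε y (fun x => max (‖x‖ ^ 2 - 1) 0 ^ κ) ≤ (3:ℝ) ^ κ * ε ^ κ := by
  haveI : Nonempty (Fin N) := ⟨⟨0, hN⟩⟩
  set F : Euc N → ℝ := fun x => max (‖x‖ ^ 2 - 1) 0 ^ κ with hF
  have hFcont : Continuous F := by
    apply (Real.continuous_rpow_const hκ).comp
    fun_prop
  have hFnonneg : ∀ x, 0 ≤ F x := fun x => Real.rpow_nonneg (le_max_right _ _) _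
  have hFint : IntegrableOn F (ball y ε) volume :=
    (hFcont.locallyIntegrable.integrableOn_isCompact (isCompact_closedBall y ε)).mono_set
      ball_subset_closedBall
  have hVpos : 0 < (volume (ball y ε)).toReal :=
    ENNReal.toReal_pos (measure_ball_pos volume y hε).ne' measure_ball_lt_top.ne
  set y' : Euc N := (1 + ε/2) • y with hy'
  have hy'norm : ‖y'‖ = 1 + ε/2 := by
    rw [hy', norm_smul, hy, mul_one, Real.norm_eq_abs, abs_of_pos (by linarith)]
  have hsub : ball y' (ε/8) ⊆ ball y ε := by
    intro x hx
    rw [mem_ball] at hx ⊢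
    have hdy : dist y' y = ε/2 := by
      rw [dist_eq_norm, hy']
      have : (1 + ε/2) • y - y = (ε/2) • y := by
        nth_rewrite 2 [← one_smul ℝ y]
        rw [← sub_smul]; norm_num
      rw [this, norm_smul, hy, mul_one, Real.norm_eq_abs, abs_of_pos (by linarith)]
    calc dist x y ≤ dist x y' + dist y' y := dist_triangle _ _ _
      _ < ε/8 + ε/2 := by linarith [hx]
      _ ≤ ε := by linarith
  -- upper bound
  have hup : ∀ x ∈ ball y ε, F x ≤ (3*ε) ^ κ := by
    intro x hx
    have hxn : ‖x‖ ≤ 1 + ε := by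
      have h1 : dist x y < ε := mem_ball.mp hx
      calc ‖x‖ ≤ ‖y‖ + ‖x - y‖ := norm_le_insert' _ _
        _ ≤ 1 + ε := by rw [hy]; rw [← dist_eq_norm] at *; linarith
    have hmax : max (‖x‖ ^ 2 - 1) 0 ≤ 3*ε := by
      apply max_le _ (by linarith)
      nlinarith [norm_nonneg x]
    exact Real.rpow_le_rpow (le_max_right _ _) hmax hκ
  have hint_up : ∫ x in ball y ε, F x ≤ (volume (ball y ε)).toReal * ((3*ε) ^ κ) := by
    calc ∫ x in ball y ε, F x ≤ ∫ _x in ball y ε, (3*ε) ^ κ :=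
          setIntegral_mono_on hFint (integrableOn_const measure_ball_lt_top.ne)
            measurableSet_ball hup
      _ = (volume (ball y ε)).toReal * ((3*ε) ^ κ) := by
          rw [setIntegral_const, smul_eq_mul]; rfl
  have hub : vmean ε y F ≤ (3:ℝ) ^ κ * ε ^ κ := by
    rw [vmean]
    have := mul_le_mul_of_nonneg_left hint_up (inv_nonneg.mpr hVpos.le)
    calc ((volume (ball y ε)).toReal)⁻¹ * ∫ x in ball y ε, F x
        ≤ ((volume (ball y ε)).toReal)⁻¹ * ((volume (ball y ε)).toReal * ((3*ε) ^ κ)) := this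
      _ = (3*ε) ^ κ := by field_simp
      _ = (3:ℝ) ^ κ * ε ^ κ := Real.mul_rpow (by norm_num) hε.le
  -- lower bound
  have hlo : ∀ x ∈ ball y' (ε/8), (ε/2) ^ κ ≤ F x := by
    intro x hx
    have h1 : dist x y' < ε/8 := mem_ball.mp hx
    have hxn : 1 + 3*ε/8 ≤ ‖x‖ := by
      have : ‖y'‖ - ‖x - y'‖ ≤ ‖x‖ := by
        have := norm_sub_norm_le y' x
        have h2 : ‖y' - x‖ = ‖x - y'‖ := norm_sub_rev _ _
        linarith [this, h2.le]
      rw [← dist_eq_norm] at this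
      rw [hy'norm] at this
      linarith
    have hmax : (ε/2 : ℝ) ≤ max (‖x‖ ^ 2 - 1) 0 := by
      refine le_trans ?_ (le_max_left _ _)
      nlinarith
    exact Real.rpow_le_rpow (by positivity) hmax hκ
  have hVs : (volume (ball y' (ε/8))).toReal
      = ((8:ℝ)⁻¹) ^ N * (volume (ball y ε)).toReal := by
    rw [Measure.addHaar_ball _ _ (by positivity : (0:ℝ) ≤ ε/8),
        Measure.addHaar_ball _ _ hε.le, finrank_euclideanSpace_fin,
        ENNReal.toReal_mul, ENNReal.toReal_mul, ENNReal.toReal_ofReal (by positivity),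
        ENNReal.toReal_ofReal (by positivity)]
    rw [div_eq_mul_inv, mul_pow]
    ring
  have hint_lo : (volume (ball y' (ε/8))).toReal * ((ε/2) ^ κ) ≤ ∫ x in ball y ε, F x := by
    calc (volume (ball y' (ε/8))).toReal * ((ε/2) ^ κ)
        = ∫ _x in ball y' (ε/8), (ε/2) ^ κ := by rw [setIntegral_const, smul_eq_mul]; rfl
      _ ≤ ∫ x in ball y' (ε/8), F x :=
          setIntegral_mono_on (integrableOn_const measure_ball_lt_top.ne)
            (hFint.mono_set hsub) measurableSet_ball hlo
      _ ≤ ∫ x in ball y ε, F x := by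
          apply setIntegral_mono_set hFint
          · exact Eventually.of_forall fun x => hFnonneg x
          · exact HasSubset.Subset.eventuallyLE hsub
  have hlb : ((8:ℝ)⁻¹) ^ N * ((2:ℝ)⁻¹) ^ κ * ε ^ κ ≤ vmean ε y F := by
    rw [vmean]
    have h2 : ((2:ℝ)⁻¹) ^ κ * ε ^ κ = (ε/2) ^ κ := by
      rw [← Real.mul_rpow (by norm_num) hε.le]; ring_nf
    calc ((8:ℝ)⁻¹) ^ N * ((2:ℝ)⁻¹) ^ κ * ε ^ κ
        = ((volume (ball y ε)).toReal)⁻¹ *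
            ((volume (ball y' (ε/8))).toReal * ((ε/2) ^ κ)) := by
          rw [hVs, mul_assoc, h2]
          field_simp
      _ ≤ ((volume (ball y ε)).toReal)⁻¹ * ∫ x in ball y ε, F x :=
          mul_le_mul_of_nonneg_left hint_lo (inv_nonneg.mpr hVpos.le)
  exact ⟨hlb, hub⟩

/-- Example 3.3: for `A = B₁(0)` and `f(x) = (max(|x|² - 1, 0))^ζ`, for each
`p ∈ {1,2}` there are `0 < c_p < C_p` with `c_p ε^{pζ} ≤ m_ε^y(f^p) ≤ C_p ε^{pζ}`
for all small `ε > 0` and all `y` on the unit sphere; in particular `f` satisfies the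
mean-value condition (1.5) with exponent `ζ`. -/
theorem stmt19 {N : ℕ} (hN : 1 ≤ N) (ζ : ℝ) (hζ : 0 ≤ ζ)
    (f : Euc N → ℝ) (hf : ∀ x : Euc N, f x = max (‖x‖ ^ 2 - 1) 0 ^ ζ) :
    ∀ p ∈ ({1, 2} : Set ℕ),
      (∃ c C : ℝ, 0 < c ∧ c < C ∧ ∃ ε₁ : ℝ, 0 < ε₁ ∧
        ∀ ε : ℝ, 0 < ε → ε < ε₁ → ∀ y ∈ Metric.sphere (0 : Euc N) 1,
          c * ε ^ ((p : ℝ) * ζ) ≤ vmean ε y (fun x => f x ^ p) ∧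
          vmean ε y (fun x => f x ^ p) ≤ C * ε ^ ((p : ℝ) * ζ)) ∧
      (∃ ε₀ : ℝ, 0 < ε₀ ∧ ∃ c C : ℝ, 0 < c ∧
        ∀ ε : ℝ, 0 < ε → ε < ε₀ → ∀ y ∈ Metric.sphere (0 : Euc N) 1,
          c ≤ ε ^ (-(ζ * (p : ℝ))) * vmean ε y (fun x => f x ^ p) ∧
          ε ^ (-(ζ * (p : ℝ))) * vmean ε y (fun x => f x ^ p) ≤ C) := by
  intro p _hp
  have hκ : 0 ≤ ζ * (p : ℝ) := mul_nonneg hζ (Nat.cast_nonneg p)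
  have hfp : (fun x : Euc N => f x ^ p) = fun x => max (‖x‖ ^ 2 - 1) 0 ^ (ζ * (p : ℝ)) := by
    funext x
    rw [hf x, ← Real.rpow_natCast (max (‖x‖ ^ 2 - 1) 0 ^ ζ) p,
      ← Real.rpow_mul (le_max_right _ _)]
  have hc : 0 < ((8:ℝ)⁻¹) ^ N * ((2:ℝ)⁻¹) ^ (ζ * (p : ℝ)) := by positivity
  have hcC : ((8:ℝ)⁻¹) ^ N * ((2:ℝ)⁻¹) ^ (ζ * (p : ℝ)) < (3:ℝ) ^ (ζ * (p : ℝ)) := by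
    have h1 : ((2:ℝ)⁻¹) ^ (ζ * (p : ℝ)) ≤ 1 :=
      Real.rpow_le_one (by norm_num) (by norm_num) hκ
    have h2 : ((8:ℝ)⁻¹ : ℝ) ^ N < 1 := pow_lt_one₀ (by norm_num) (by norm_num) (by omega)
    have h3 : (1:ℝ) ≤ (3:ℝ) ^ (ζ * (p : ℝ)) := Real.one_le_rpow (by norm_num) hκ
    have h4 : (0:ℝ) < ((2:ℝ)⁻¹) ^ (ζ * (p : ℝ)) :=
      Real.rpow_pos_of_pos (by norm_num) _
    nlinarith
  have main : ∀ ε : ℝ, 0 < ε → ε < 1 → ∀ y ∈ Metric.sphere (0 : Euc N) 1,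
      ((8:ℝ)⁻¹) ^ N * ((2:ℝ)⁻¹) ^ (ζ * (p : ℝ)) * ε ^ (ζ * (p : ℝ))
        ≤ vmean ε y (fun x => f x ^ p) ∧
      vmean ε y (fun x => f x ^ p) ≤ (3:ℝ) ^ (ζ * (p : ℝ)) * ε ^ (ζ * (p : ℝ)) := by
    intro ε hε hε1 y hy
    rw [hfp]
    exact key hN (ζ * (p : ℝ)) hκ hε hε1 (mem_sphere_zero_iff_norm.mp hy)
  constructor
  · refine ⟨_, _, hc, hcC, 1, one_pos, ?_⟩
    intro ε hε hε1 y hy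
    have h := main ε hε hε1 y hy
    rwa [show (p : ℝ) * ζ = ζ * (p : ℝ) from mul_comm _ _]
  · refine ⟨1, one_pos, _, (3:ℝ) ^ (ζ * (p : ℝ)), hc, ?_⟩
    intro ε hε hε1 y hy
    obtain ⟨h1, h2⟩ := main ε hε hε1 y hy
    have hεκ : (0:ℝ) < ε ^ (ζ * (p : ℝ)) := Real.rpow_pos_of_pos hε _
    rw [Real.rpow_neg hε.le, inv_mul_eq_div]
    constructor
    · rw [le_div_iff₀ hεκ]; exact h1
    · rw [div_le_iff₀ hεκ]; exact h2
end
end
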